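/- arXiv:1804.09454 — 3 statements merged into one kernel-verified Lean document; each statement's English description precedes it below -/
import Mathlib

section
/- The quasi-Clifford algebra over a field F of characteristic not 2, generated by m elements α₁,…,α_m subject to α_i² = κ_i (with κ_i nonzero in F) and α_j α_i = (-1)^{δ_{ij}} α_i α_j for i < j (with δ_{ij} ∈ {0,1}), has dimension 2^m as an F-vector space, with basis {α₁^{ε₁}⋯α_m^{ε_m} : ε_i ∈ {0,1}}. -/
open FreeAlgebra

/-- The defining relations of the quasi-Clifford algebra `C_F[m, (κᵢ), (δᵢⱼ)]`:
`αᵢ² = κᵢ` and `αⱼ αᵢ = (-1)^{δᵢⱼ} αᵢ αⱼ` for `i < j`. -/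
inductive QCRel (F : Type*) [Field F] (m : ℕ) (κ : Fin m → F) (δ : Fin m → Fin m → Fin 2) :
    FreeAlgebra F (Fin m) → FreeAlgebra F (Fin m) → Prop
  | sq (i : Fin m) : QCRel F m κ δ (ι F i * ι F i) (algebraMap F _ (κ i))
  | comm (i j : Fin m) (h : i < j) :
      QCRel F m κ δ (ι F j * ι F i) (((-1 : F) ^ (δ i j : ℕ)) • (ι F i * ι F j))

/-- The quasi-Clifford algebra `C_F[m, (κᵢ), (δᵢⱼ)]`. -/
abbrev QCAlgebra (F : Type*) [Field F] (m : ℕ) (κ : Fin m → F) (δ : Fin m → Fin m → Fin 2) :=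
  RingQuot (QCRel F m κ δ)

/-- The generator `αᵢ` of the quasi-Clifford algebra. -/
noncomputable def QCgen (F : Type*) [Field F] (m : ℕ) (κ : Fin m → F)
    (δ : Fin m → Fin m → Fin 2) (i : Fin m) : QCAlgebra F m κ δ :=
  RingQuot.mkAlgHom F (QCRel F m κ δ) (ι F i)

namespace QCAux

variable {F : Type*} [Field F] {m : ℕ}

lemma fin2_cases (a : Fin 2) : a = 0 ∨ a = 1 := by omega

/-- flip one coordinate of a multi-index -/
def flp (ε : Fin m → Fin 2) (i : Fin m) : Fin m → Fin 2 := Function.update ε i (ε i + 1)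

lemma flp_self (ε : Fin m → Fin 2) (i : Fin m) : flp ε i i = ε i + 1 := by
  simp [flp]

lemma flp_ne (ε : Fin m → Fin 2) {i j : Fin m} (h : j ≠ i) : flp ε i j = ε j := by
  simp [flp, Function.update_of_ne h]

lemma flp_flp (ε : Fin m → Fin 2) (i : Fin m) : flp (flp ε i) i = ε := by
  funext j
  by_cases h : j = i
  · subst h; rw [flp_self, flp_self]; omega
  · rw [flp_ne _ h, flp_ne _ h]

lemma flp_comm (ε : Fin m → Fin 2) {i j : Fin m} (h : i ≠ j) :
    flp (flp ε i) j = flp (flp ε j) i := by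
  unfold flp
  rw [Function.update_of_ne (Ne.symm h), Function.update_of_ne h, Function.update_comm h]

lemma sign_pow_helper (s : ℕ) (x : F) (a : Fin 2) :
    (-1 : F) ^ s * x ^ ((a + 1 : Fin 2) : ℕ) * ((-1 : F) ^ s * x ^ (a : ℕ)) = x := by
  have h1 : (-1 : F) ^ s * (-1 : F) ^ s = 1 := by rw [← mul_pow]; norm_num
  have h2 : ((a + 1 : Fin 2) : ℕ) + (a : ℕ) = 1 := by omega
  rw [mul_mul_mul_comm, h1, one_mul, ← pow_add, h2, pow_one]

/-- The structure scalar of left multiplication by `αᵢ` on the monomial basis. -/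
def cf (κ : Fin m → F) (δ : Fin m → Fin m → Fin 2) (i : Fin m) (ε : Fin m → Fin 2) : F :=
  (-1) ^ (∑ j ∈ Finset.Iio i, (δ j i : ℕ) * (ε j : ℕ)) * κ i ^ (ε i : ℕ)

variable (κ : Fin m → F) (δ : Fin m → Fin m → Fin 2)

lemma cf_flp_self_mul (i : Fin m) (ε : Fin m → Fin 2) :
    cf κ δ i (flp ε i) * cf κ δ i ε = κ i := by
  unfold cf
  have hsum : ∑ j ∈ Finset.Iio i, (δ j i : ℕ) * ((flp ε i j : ℕ))
      = ∑ j ∈ Finset.Iio i, (δ j i : ℕ) * (ε j : ℕ) := by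
    refine Finset.sum_congr rfl fun j hj => ?_
    rw [flp_ne _ (Finset.mem_Iio.mp hj).ne]
  rw [hsum, flp_self]
  exact sign_pow_helper _ _ _

/-- flipping at an index `k > i` does not change `cf i`. -/
lemma cf_flp_gt {i k : Fin m} (h : i < k) (ε : Fin m → Fin 2) :
    cf κ δ i (flp ε k) = cf κ δ i ε := by
  unfold cf
  rw [flp_ne _ h.ne]
  congr 2
  exact Finset.sum_congr rfl fun j hj => by
    rw [flp_ne _ (((Finset.mem_Iio.mp hj).trans h).ne)]

/-- flipping at an index `k < i` multiplies `cf i` by `(-1)^{δ k i}`. -/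
lemma cf_flp_lt {i k : Fin m} (h : k < i) (ε : Fin m → Fin 2) :
    cf κ δ i (flp ε k) = (-1 : F) ^ (δ k i : ℕ) * cf κ δ i ε := by
  unfold cf
  rw [flp_ne _ h.ne']
  have hk : k ∈ Finset.Iio i := Finset.mem_Iio.mpr h
  rw [← Finset.add_sum_erase _ _ hk, ← Finset.add_sum_erase _ (fun j => (δ j i : ℕ) * (ε j : ℕ)) hk]
  have hrest : ∑ j ∈ (Finset.Iio i).erase k, (δ j i : ℕ) * ((flp ε k) j : ℕ)
      = ∑ j ∈ (Finset.Iio i).erase k, (δ j i : ℕ) * (ε j : ℕ) :=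
    Finset.sum_congr rfl fun j hj => by rw [flp_ne _ (Finset.ne_of_mem_erase hj)]
  rw [hrest, flp_self, pow_add, pow_add, ← mul_assoc, ← mul_assoc]
  congr 2
  have h2 : (δ k i : ℕ) * ((ε k + 1 : Fin 2) : ℕ) + (δ k i : ℕ) * (ε k : ℕ) = (δ k i : ℕ) := by
    have : ((ε k + 1 : Fin 2) : ℕ) + ((ε k : Fin 2) : ℕ) = 1 := by omega
    nlinarith [this]
  calc (-1:F) ^ ((δ k i : ℕ) * ((ε k + 1 : Fin 2) : ℕ))
      = (-1:F) ^ ((δ k i : ℕ) * ((ε k + 1 : Fin 2) : ℕ)) *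
        ((-1:F) ^ ((δ k i : ℕ) * (ε k : ℕ)) * (-1:F) ^ ((δ k i : ℕ) * (ε k : ℕ))) := by
        rw [← mul_pow]; norm_num
    _ = ((-1:F) ^ ((δ k i : ℕ) * ((ε k + 1 : Fin 2) : ℕ)) * (-1:F) ^ ((δ k i : ℕ) * (ε k : ℕ))) *
        (-1:F) ^ ((δ k i : ℕ) * (ε k : ℕ)) := by ring
    _ = (-1:F) ^ (δ k i : ℕ) * (-1:F) ^ ((δ k i : ℕ) * (ε k : ℕ)) := by rw [← pow_add, h2]

lemma cf_comm {i j : Fin m} (h : i < j) (η : Fin m → Fin 2) :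
    cf κ δ j (flp η j) * cf κ δ i (flp (flp η j) i)
      = (-1 : F) ^ (δ i j : ℕ) * (cf κ δ i (flp η i) * cf κ δ j (flp (flp η j) i)) := by
  have e1 : cf κ δ i (flp (flp η j) i) = cf κ δ i (flp η i) := by
    have : flp (flp η j) i = flp (flp η i) j := by
      unfold flp
      rw [Function.update_of_ne h.ne', Function.update_of_ne h.ne,
        Function.update_comm h.ne.symm]
    rw [this, cf_flp_gt κ δ h]
  have e3 : cf κ δ j (flp (flp η j) i) = (-1 : F) ^ (δ i j : ℕ) * cf κ δ j (flp η j) :=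
    cf_flp_lt κ δ h _
  rw [e1, e3]
  have h1 : (-1 : F) ^ (δ i j : ℕ) * (-1 : F) ^ (δ i j : ℕ) = 1 := by rw [← mul_pow]; norm_num
  calc cf κ δ j (flp η j) * cf κ δ i (flp η i)
      = ((-1:F) ^ (δ i j : ℕ) * (-1:F) ^ (δ i j : ℕ)) * (cf κ δ j (flp η j) * cf κ δ i (flp η i)) := by
        rw [h1, one_mul]
    _ = (-1 : F) ^ (δ i j : ℕ) * (cf κ δ i (flp η i) * ((-1:F) ^ (δ i j : ℕ) * cf κ δ j (flp η j))) := by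
        ring

/-- The operator realizing left multiplication by `αᵢ` on the model space. -/
def Lop (i : Fin m) : ((Fin m → Fin 2) → F) →ₗ[F] ((Fin m → Fin 2) → F) where
  toFun v := fun η => cf κ δ i (flp η i) * v (flp η i)
  map_add' u v := by funext η; simp [mul_add]
  map_smul' c v := by funext η; simp [Pi.smul_apply, smul_eq_mul]; ring

lemma Lop_apply (i : Fin m) (v : (Fin m → Fin 2) → F) (η : Fin m → Fin 2) :
    Lop κ δ i v η = cf κ δ i (flp η i) * v (flp η i) := rfl

/-- basis vector of the model space -/
def ev (ε : Fin m → Fin 2) : (Fin m → Fin 2) → F := Pi.single ε 1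

lemma Lop_ev (i : Fin m) (ε : Fin m → Fin 2) :
    Lop κ δ i (ev ε) = cf κ δ i ε • ev (flp ε i) := by
  funext η
  rw [Lop_apply, Pi.smul_apply, ev, ev]
  by_cases h : η = flp ε i
  · subst h
    rw [flp_flp, Pi.single_eq_same, Pi.single_eq_same, mul_one, smul_eq_mul, mul_one]
  · have h2 : flp η i ≠ ε := fun hc => h (by rw [← hc, flp_flp])
    rw [Pi.single_eq_of_ne h2, Pi.single_eq_of_ne h, mul_zero, smul_zero]

/-- the representation of the free algebra -/
noncomputable def rho : FreeAlgebra F (Fin m) →ₐ[F] Module.End F ((Fin m → Fin 2) → F) :=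
  FreeAlgebra.lift F (fun i => Lop κ δ i)

lemma rho_compat : ∀ ⦃x y⦄, QCRel F m κ δ x y → rho κ δ x = rho κ δ y := by
  intro x y hxy
  induction hxy with
  | sq i =>
    rw [map_mul, AlgHom.commutes]
    refine LinearMap.ext fun v => funext fun η => ?_
    rw [Module.algebraMap_end_apply, Module.End.mul_apply, Pi.smul_apply,
      rho, lift_ι_apply, Lop_apply, Lop_apply, flp_flp, ← mul_assoc,
      cf_flp_self_mul, smul_eq_mul]
  | comm i j h =>
    rw [map_mul, map_smul, map_mul]
    refine LinearMap.ext fun v => funext fun η => ?_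
    rw [Module.End.mul_apply, LinearMap.smul_apply, Module.End.mul_apply, Pi.smul_apply,
      rho, lift_ι_apply, lift_ι_apply, Lop_apply, Lop_apply, Lop_apply, Lop_apply,
      smul_eq_mul]
    rw [flp_comm η h.ne]
    linear_combination (v (flp (flp η j) i)) * cf_comm κ δ h η

/-- the representation of the quasi-Clifford algebra -/
noncomputable def Phi : QCAlgebra F m κ δ →ₐ[F] Module.End F ((Fin m → Fin 2) → F) :=
  RingQuot.liftAlgHom F ⟨rho κ δ, rho_compat κ δ⟩

lemma Phi_gen (i : Fin m) : Phi κ δ (QCgen F m κ δ i) = Lop κ δ i := by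
  rw [Phi, QCgen, RingQuot.liftAlgHom_mkAlgHom_apply, rho, lift_ι_apply]

/-- applying an ordered product of the operators to a basis vector supported above -/
lemma prod_Lop_ev (l : List (Fin m)) (hs : l.Pairwise (· < ·)) (ε η : Fin m → Fin 2)
    (hη : ∀ j', (∃ k ∈ l, j' ≤ k) → η j' = 0) :
    ((l.map fun j => (Lop κ δ j : Module.End F ((Fin m → Fin 2) → F)) ^ (ε j : ℕ)).prod)
        (ev η)
      = ev (fun j => if j ∈ l then ε j else η j) := by
  induction l with
  | nil =>
    simp only [List.map_nil, List.prod_nil, Module.End.one_apply, List.not_mem_nil, if_false]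
  | cons a l' ih =>
    have ha : ∀ b ∈ l', a < b := (List.pairwise_cons.mp hs).1
    have hIH := ih (List.pairwise_cons.mp hs).2
      (fun j' hex => hη j' (by obtain ⟨k, hk, hjk⟩ := hex; exact ⟨k, List.mem_cons_of_mem a hk, hjk⟩))
    have hanl : a ∉ l' := fun hmem => lt_irrefl a (ha a hmem)
    have hηa : η a = 0 := hη a ⟨a, List.mem_cons_self, le_refl a⟩
    rw [List.map_cons, List.prod_cons, Module.End.mul_apply, hIH]
    set η' : Fin m → Fin 2 := fun j => if j ∈ l' then ε j else η j with hη'def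
    have hη'a : η' a = 0 := by simp [hη'def, hanl, hηa]
    rcases fin2_cases (ε a) with h0 | h1
    · have hz : ((ε a : Fin 2) : ℕ) = 0 := by rw [h0]; rfl
      rw [hz, pow_zero, Module.End.one_apply]
      have hfn : η' = fun j => if j ∈ a :: l' then ε j else η j := by
        funext j
        by_cases hj : j = a
        · subst hj
          simp [hη'def, hanl, hηa, h0]
        · simp [hη'def, List.mem_cons, hj]
      rw [hfn]
    · have ho : ((ε a : Fin 2) : ℕ) = 1 := by rw [h1]; rfl
      rw [ho, pow_one, Lop_ev]
      have hcf : cf κ δ a η' = 1 := by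
        unfold cf
        have hsum : ∑ j ∈ Finset.Iio a, (δ j a : ℕ) * ((η' j : Fin 2) : ℕ) = 0 := by
          refine Finset.sum_eq_zero fun j hj => ?_
          have hj' : j < a := Finset.mem_Iio.mp hj
          have hjl : j ∉ l' := fun hm => absurd (ha j hm) (by omega)
          have hz : η j = 0 := hη j ⟨a, List.mem_cons_self, hj'.le⟩
          simp [hη'def, hjl, hz]
        rw [hsum, pow_zero, one_mul, hη'a]
        norm_num
      rw [hcf, one_smul]
      have hfn : flp η' a = fun j => if j ∈ a :: l' then ε j else η j := by
        funext j
        by_cases hj : j = a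
        · subst hj
          rw [flp_self, hη'a]
          simp [List.mem_cons, h1]
        · rw [flp_ne _ hj]
          simp [hη'def, List.mem_cons, hj]
      rw [hfn]

/-- Φ applied to an ordered monomial, evaluated at the vacuum vector -/
lemma Phi_monomial (ε : Fin m → Fin 2) :
    Phi κ δ ((List.ofFn fun i => QCgen F m κ δ i ^ (ε i : ℕ)).prod) (ev 0) = ev ε := by
  rw [map_list_prod, List.map_ofFn]
  have : (List.ofFn ((Phi κ δ) ∘ fun i => QCgen F m κ δ i ^ (ε i : ℕ)))
      = List.ofFn fun i => (Lop κ δ i : Module.End F ((Fin m → Fin 2) → F)) ^ (ε i : ℕ) := by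
    congr 1
    funext i
    simp [map_pow, Phi_gen]
  rw [this, List.ofFn_eq_map, prod_Lop_ev κ δ _ (List.pairwise_lt_finRange m) ε 0
    (fun _ _ => rfl)]
  congr 1
  funext j
  simp [List.mem_finRange]

lemma gen_sq (i : Fin m) :
    QCgen F m κ δ i * QCgen F m κ δ i = algebraMap F (QCAlgebra F m κ δ) (κ i) := by
  have h := RingQuot.mkAlgHom_rel F (QCRel.sq (κ := κ) (δ := δ) i)
  rwa [map_mul, AlgHom.commutes] at h

lemma gen_comm {a i : Fin m} (h : a < i) (e : Fin 2) :
    QCgen F m κ δ i * QCgen F m κ δ a ^ (e : ℕ)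
      = ((-1 : F) ^ ((δ a i : ℕ) * (e : ℕ))) • (QCgen F m κ δ a ^ (e : ℕ) * QCgen F m κ δ i) := by
  rcases fin2_cases e with h0 | h1
  · subst h0; simp
  · subst h1
    have h2 := RingQuot.mkAlgHom_rel F (QCRel.comm (κ := κ) (δ := δ) a i h)
    rw [map_mul, map_smul, map_mul] at h2
    simpa [QCgen] using h2

lemma mul_prod (l : List (Fin m)) (hs : l.Pairwise (· < ·)) (ε : Fin m → Fin 2) (i : Fin m)
    (hi : i ∈ l) :
    ∃ c : F, QCgen F m κ δ i * (l.map fun j => QCgen F m κ δ j ^ (ε j : ℕ)).prod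
      = c • (l.map fun j => QCgen F m κ δ j ^ ((flp ε i j : Fin 2) : ℕ)).prod := by
  induction l with
  | nil => exact absurd hi List.not_mem_nil
  | cons a l' ih =>
    have ha : ∀ b ∈ l', a < b := (List.pairwise_cons.mp hs).1
    rw [List.map_cons, List.prod_cons, List.map_cons, List.prod_cons]
    rcases List.mem_cons.mp hi with rfl | hil'
    · -- i = a
      have hanl : i ∉ l' := fun hmem => lt_irrefl i (ha i hmem)
      have hrest : (l'.map fun j => QCgen F m κ δ j ^ ((flp ε i j : Fin 2) : ℕ))
          = l'.map fun j => QCgen F m κ δ j ^ (ε j : ℕ) := by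
        refine List.map_congr_left fun j hj => ?_
        have hji : j ≠ i := by rintro rfl; exact hanl hj
        rw [flp_ne _ hji]
      rw [hrest]
      rcases fin2_cases (ε i) with h0 | h1
      · refine ⟨1, ?_⟩
        rw [h0, flp_self, h0]
        norm_num
      · refine ⟨κ i, ?_⟩
        rw [h1, flp_self, h1]
        have : ((1 : Fin 2) : ℕ) = 1 := rfl
        rw [this]
        have h2 : ((1 + 1 : Fin 2) : ℕ) = 0 := rfl
        rw [h2, pow_zero, pow_one, one_mul, ← mul_assoc, gen_sq, Algebra.smul_def]
    · -- i ∈ l'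
      have hai : a < i := ha i hil'
      obtain ⟨c, hc⟩ := ih (List.pairwise_cons.mp hs).2 hil'
      refine ⟨(-1 : F) ^ ((δ a i : ℕ) * (ε a : ℕ)) * c, ?_⟩
      have hhead : ((flp ε i a : Fin 2) : ℕ) = (ε a : ℕ) := by
        have hne : a ≠ i := by rintro rfl; exact lt_irrefl a hai
        rw [flp_ne _ hne]
      rw [hhead, ← mul_assoc, gen_comm κ δ hai (ε a), smul_mul_assoc, mul_assoc, hc,
        mul_smul_comm, smul_smul]

/-- the ordered monomial family -/
noncomputable def bmon (ε : Fin m → Fin 2) : QCAlgebra F m κ δ :=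
  (List.ofFn fun i => QCgen F m κ δ i ^ (ε i : ℕ)).prod

lemma bmon_eq_map (ε : Fin m → Fin 2) :
    bmon κ δ ε = ((List.finRange m).map fun j => QCgen F m κ δ j ^ (ε j : ℕ)).prod := by
  rw [bmon, List.ofFn_eq_map]

lemma bmon_zero : bmon κ δ (0 : Fin m → Fin 2) = 1 := by
  refine List.prod_eq_one fun x hx => ?_
  obtain ⟨i, rfl⟩ := List.mem_ofFn.mp hx
  norm_num

lemma span_bmon : Submodule.span F (Set.range (bmon κ δ)) = ⊤ := by
  have hadj : Algebra.adjoin F (Set.range (QCgen F m κ δ)) = ⊤ := by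
    have h1 : Set.range (QCgen F m κ δ)
        = (RingQuot.mkAlgHom F (QCRel F m κ δ)) '' Set.range (ι F) := by
      rw [← Set.range_comp]; rfl
    rw [h1, ← AlgHom.map_adjoin, FreeAlgebra.adjoin_range_ι, Algebra.map_top]
    exact (AlgHom.range_eq_top _).mpr (RingQuot.mkAlgHom_surjective F _)
  refine top_unique fun x _ => ?_
  have hx' : x ∈ Algebra.adjoin F (Set.range (QCgen F m κ δ)) := by
    rw [hadj]; exact Algebra.mem_top (R := F)
  have hx : x ∈ Subalgebra.toSubmodule (Algebra.adjoin F (Set.range (QCgen F m κ δ))) :=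
    (Subalgebra.mem_toSubmodule _).mpr hx'
  rw [Algebra.adjoin_eq_span] at hx
  refine Submodule.span_le.mpr (fun y hy => ?_) hx
  induction hy using Submonoid.closure_induction_left with
  | one =>
    rw [SetLike.mem_coe, ← bmon_zero κ δ]
    exact Submodule.subset_span (Set.mem_range_self _)
  | mul_left g hg z hz ihz =>
    obtain ⟨i, rfl⟩ := hg
    rw [SetLike.mem_coe] at ihz ⊢
    clear hz
    induction ihz using Submodule.span_induction with
    | mem z' hz' =>
      obtain ⟨ε, rfl⟩ := hz'
      obtain ⟨c, hc⟩ := mul_prod κ δ (List.finRange m)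
        (List.pairwise_lt_finRange m) ε i (List.mem_finRange i)
      rw [bmon_eq_map, hc, ← bmon_eq_map]
      exact Submodule.smul_mem _ c (Submodule.subset_span (Set.mem_range_self _))
    | zero => rw [mul_zero]; exact Submodule.zero_mem _
    | add a b _ _ iha ihb => rw [mul_add]; exact Submodule.add_mem _ iha ihb
    | smul r a _ iha => rw [mul_smul_comm]; exact Submodule.smul_mem _ r iha

/-- evaluation of Φ at the vacuum vector, as a linear map -/
noncomputable def Teval : QCAlgebra F m κ δ →ₗ[F] ((Fin m → Fin 2) → F) where
  toFun x := Phi κ δ x (ev 0)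
  map_add' x y := by rw [map_add, LinearMap.add_apply]
  map_smul' c x := by rw [map_smul, LinearMap.smul_apply, RingHom.id_apply]

lemma linind_bmon : LinearIndependent F (bmon κ δ) := by
  have hcomp : (Teval κ δ) ∘ (bmon κ δ) = fun ε => ev (F := F) ε := by
    funext ε
    exact Phi_monomial κ δ ε
  refine LinearIndependent.of_comp (Teval κ δ) ?_
  rw [hcomp]
  have : (fun ε => ev (F := F) (m := m) ε) = fun ε => Pi.basisFun F (Fin m → Fin 2) ε := by
    funext ε
    rw [Pi.basisFun_apply, ev]
  rw [this]
  exact (Pi.basisFun F (Fin m → Fin 2)).linearIndependent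

end QCAux

/-- Gastineau-Hills (2.3): the quasi-Clifford algebra over a field `F` of characteristic
not 2, with each `κᵢ ≠ 0`, has dimension `2^m` over `F`, with basis the ordered products
`α₁^{ε₁} ⋯ α_m^{ε_m}`, `εᵢ ∈ {0,1}`. -/
theorem stmt_0 (F : Type*) [Field F] (m : ℕ) (hm : 0 < m) (κ : Fin m → F)
    (δ : Fin m → Fin m → Fin 2) (hchar : ringChar F ≠ 2) (hκ : ∀ i, κ i ≠ 0) :
    Module.finrank F (QCAlgebra F m κ δ) = 2 ^ m ∧
      ∃ B : Module.Basis (Fin m → Fin 2) F (QCAlgebra F m κ δ),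
        ∀ ε : Fin m → Fin 2,
          B ε = (List.ofFn fun i => QCgen F m κ δ i ^ (ε i : ℕ)).prod := by
  have hsp : ⊤ ≤ Submodule.span F (Set.range (QCAux.bmon κ δ)) :=
    le_of_eq (QCAux.span_bmon κ δ).symm
  constructor
  · rw [Module.finrank_eq_card_basis (Module.Basis.mk (QCAux.linind_bmon κ δ) hsp),
      Fintype.card_fun, Fintype.card_fin, Fintype.card_fin]
  · exact ⟨Module.Basis.mk (QCAux.linind_bmon κ δ) hsp,
      fun ε => (Module.Basis.mk_apply (QCAux.linind_bmon κ δ) hsp ε).trans rfl⟩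
end

section
/- The tensor product over ℝ of the quaternions ℍ with itself is isomorphic as a real algebra to the algebra ℝ(4) of 4×4 real matrices. -/
open scoped TensorProduct
open Quaternion

noncomputable section

abbrev HH := Quaternion ℝ

def B : Module.Basis (Fin 4) ℝ HH := QuaternionAlgebra.basisOneIJK (-1) 0 (-1)

theorem B_apply (m : Fin 4) : B m = (![⟨1,0,0,0⟩,⟨0,1,0,0⟩,⟨0,0,1,0⟩,⟨0,0,0,1⟩] : Fin 4 → HH) m := by
  apply B.repr.injective
  apply DFunLike.coe_injective
  rw [Module.Basis.repr_self]
  show _ = ⇑((QuaternionAlgebra.basisOneIJK (-1) 0 (-1)).repr _)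
  erw [QuaternionAlgebra.coe_basisOneIJK_repr]
  ext n
  fin_cases m <;> fin_cases n <;> simp [Finsupp.single_apply]

def rmulStar : HH →ₐ[ℝ] Module.End ℝ HH where
  toFun y := LinearMap.mulRight ℝ (star y)
  map_one' := LinearMap.ext fun q => by simp
  map_mul' y y' := LinearMap.ext fun q => by
    simp [Module.End.mul_apply, mul_assoc]
  map_zero' := LinearMap.ext fun q => by simp
  map_add' y y' := LinearMap.ext fun q => by simp [mul_add]
  commutes' r := LinearMap.ext fun q => by
    simp [Algebra.algebraMap_eq_smul_one, Module.algebraMap_end_apply]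

def Φ0 : HH ⊗[ℝ] HH →ₐ[ℝ] Module.End ℝ HH :=
  Algebra.TensorProduct.lift (Algebra.lmul ℝ HH) rmulStar
    (fun x y => LinearMap.commute_mulLeft_right x (star y))

theorem Φ0_tmul (x y q : HH) : Φ0 (x ⊗ₜ[ℝ] y) q = x * q * star y := by
  simp [Φ0, rmulStar, Algebra.TensorProduct.lift_tmul, mul_assoc]

theorem sumA (q : HH) : ∑ m : Fin 4, B m * q * star (B m) = ((4 : ℝ) * q.re) • 1 := by
  simp only [Fin.sum_univ_four]
  ext <;> simp only [Quaternion.re_add, Quaternion.imI_add, Quaternion.imJ_add, Quaternion.imK_add, Quaternion.re_mul, Quaternion.imI_mul, Quaternion.imJ_mul, Quaternion.imK_mul, Quaternion.re_star, Quaternion.imI_star, Quaternion.imJ_star, Quaternion.imK_star] <;> simp [B_apply] <;> ring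

theorem reBB (b c : Fin 4) : (star (B b) * B c).re = if b = c then 1 else 0 := by
  simp only [Quaternion.re_mul, Quaternion.re_star, Quaternion.imI_star, Quaternion.imJ_star, Quaternion.imK_star]
  fin_cases b <;> fin_cases c <;> simp [B_apply] <;> norm_num

def t (a b : Fin 4) : HH ⊗[ℝ] HH :=
  (1/4 : ℝ) • ∑ m : Fin 4, (B a * B m * star (B b)) ⊗ₜ[ℝ] B m

theorem key (a b c : Fin 4) : Φ0 (t a b) (B c) = if b = c then B a else 0 := by
  have h : (∑ m : Fin 4, B a * B m * star (B b) * B c * star (B m))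
      = B a * ∑ m : Fin 4, B m * (star (B b) * B c) * star (B m) := by
    rw [Finset.mul_sum]; exact Finset.sum_congr rfl fun m _ => by simp only [mul_assoc]
  have hs := Φ0.toLinearMap.map_smul (1/4 : ℝ)
    (∑ m : Fin 4, (B a * B m * star (B b)) ⊗ₜ[ℝ] B m)
  have hsum := map_sum Φ0.toLinearMap
    (fun m : Fin 4 => (B a * B m * star (B b)) ⊗ₜ[ℝ] B m) Finset.univ
  simp only [AlgHom.toLinearMap_apply] at hs hsum
  rw [t, hs, hsum]
  simp only [LinearMap.smul_apply, LinearMap.sum_apply, Φ0_tmul]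
  rw [h, sumA, mul_smul_comm, smul_smul, mul_one, reBB]
  split_ifs <;> norm_num

def Φ : HH ⊗[ℝ] HH →ₐ[ℝ] Matrix (Fin 4) (Fin 4) ℝ :=
  (LinearMap.toMatrixAlgEquiv B).toAlgHom.comp Φ0

theorem Φ_t (a b : Fin 4) : Φ (t a b) = Matrix.single a b 1 := by
  ext i j
  simp only [Φ, AlgHom.coe_comp, AlgEquiv.toAlgHom_eq_coe, AlgHom.coe_coe, Function.comp_apply,
    LinearMap.toMatrixAlgEquiv_apply, key]
  erw [LinearMap.toMatrixAlgEquiv_apply, key]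
  split_ifs with h
  · subst h
    simp [Module.Basis.repr_self, Finsupp.single_apply, Matrix.single]
  · simp [Matrix.single, h]

theorem Φ_surj : Function.Surjective Φ := fun M => by
  have : M ∈ Φ.range := by
    rw [Matrix.matrix_eq_sum_single M]
    refine Subalgebra.sum_mem _ fun i _ => Subalgebra.sum_mem _ fun j _ => ?_
    have h1 : Matrix.single i j (M i j) = M i j • Matrix.single i j 1 := by
      simp [Matrix.smul_single]
    rw [h1]
    exact Subalgebra.smul_mem _ (show _ ∈ Φ.range from ⟨t i j, Φ_t i j⟩) _
  exact this

theorem Φ_inj : Function.Injective Φ := by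
  have hfr : Module.finrank ℝ (HH ⊗[ℝ] HH) = Module.finrank ℝ (Matrix (Fin 4) (Fin 4) ℝ) := by
    rw [Module.finrank_tensorProduct, Quaternion.finrank_eq_four,
      Module.finrank_matrix]
    simp
  have := (LinearMap.injective_iff_surjective_of_finrank_eq_finrank
    (f := Φ.toLinearMap) hfr).mpr Φ_surj
  exact this

/-- `ℍ ⊗_ℝ ℍ ≅ ℝ(4)`, the 4×4 real matrices, as real algebras. -/
theorem stmt_8 :
    Nonempty ((Quaternion ℝ ⊗[ℝ] Quaternion ℝ) ≃ₐ[ℝ] Matrix (Fin 4) (Fin 4) ℝ) :=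
  ⟨AlgEquiv.ofBijective Φ ⟨Φ_inj, Φ_surj⟩⟩
end
end

section
/- If A₁,…,A_n are monomial {-1,0,1} matrices of order n with pairwise disjoint supports (A_j ∗ A_k = 0 for j ≠ k, where ∗ is the entrywise product) and ΣA_k ∈ {-1,1}^{n×n}, each A_k orthogonal, satisfying A_j A_kᵀ + λ_{jk} A_k A_jᵀ = 0 for j ≠ k, and B₁,…,B_n are {-1,1} matrices of order b satisfying B_j B_kᵀ - λ_{jk} B_k B_jᵀ = 0 for j ≠ k and Σ_k B_k B_kᵀ = n b I_b, then H = Σ_k A_k ⊗ B_k is a Hadamard matrix of order nb, i.e., H has entries in {-1,1} and H Hᵀ = n b I_{nb}. -/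
open Matrix
open scoped Kronecker

/-- The plug-in construction: if the monomial `{-1,0,1}` matrices `A k` of order `n`
have pairwise disjoint supports, sum to a `{-1,1}` matrix, are orthogonal and satisfy
`A j * (A k)ᵀ + λ j k • (A k * (A j)ᵀ) = 0` for `j ≠ k`, and the `{-1,1}` matrices
`B k` of order `b` satisfy `B j * (B k)ᵀ - λ j k • (B k * (B j)ᵀ) = 0` for `j ≠ k`
and `Σ k, B k * (B k)ᵀ = (n*b) • 1`, then `H = Σ k, A k ⊗ₖ B k` is a Hadamard matrix
of order `n * b`. -/
theorem stmt_13 {n b : ℕ}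
    (A : Fin n → Matrix (Fin n) (Fin n) ℝ)
    (B : Fin n → Matrix (Fin b) (Fin b) ℝ)
    (Λ : Fin n → Fin n → ℝ)
    (hΛ : ∀ j k, j ≠ k → Λ j k = 1 ∨ Λ j k = -1)
    (hΛsymm : ∀ j k, Λ j k = Λ k j)
    (hAentries : ∀ k i j, A k i j = -1 ∨ A k i j = 0 ∨ A k i j = 1)
    (hAmonomial_row : ∀ k i, ∃! j, A k i j ≠ 0)
    (hAmonomial_col : ∀ k j, ∃! i, A k i j ≠ 0)
    (hdisj : ∀ j k, j ≠ k → (A j) ⊙ (A k) = 0)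
    (hsum : ∀ i j, (∑ k, A k) i j = -1 ∨ (∑ k, A k) i j = 1)
    (hAorth : ∀ k, A k * (A k)ᵀ = 1)
    (hAamic : ∀ j k, j ≠ k → A j * (A k)ᵀ + Λ j k • (A k * (A j)ᵀ) = 0)
    (hBentries : ∀ k i j, B k i j = -1 ∨ B k i j = 1)
    (hBamic : ∀ j k, j ≠ k → B j * (B k)ᵀ - Λ j k • (B k * (B j)ᵀ) = 0)
    (hBsum : ∑ k, B k * (B k)ᵀ = ((n * b : ℕ) : ℝ) • 1) :
    (∀ p q, (∑ k, A k ⊗ₖ B k) p q = -1 ∨ (∑ k, A k ⊗ₖ B k) p q = 1) ∧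
      (∑ k, A k ⊗ₖ B k) * (∑ k, A k ⊗ₖ B k)ᵀ = ((n * b : ℕ) : ℝ) • 1 := by
  constructor
  · -- entries are ±1
    rintro ⟨i, r⟩ ⟨j, c⟩
    have hs := hsum i j
    rw [Matrix.sum_apply] at hs
    -- there is exactly one k with A k i j ≠ 0
    have hne : (∑ k, A k i j) ≠ 0 := by rcases hs with h | h <;> rw [h] <;> norm_num
    have hex : ∃ k₀, A k₀ i j ≠ 0 := by
      by_contra h
      push_neg at h
      exact hne (Finset.sum_eq_zero fun k _ => h k)
    obtain ⟨k₀, hk₀⟩ := hex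
    have hzero : ∀ k, k ≠ k₀ → A k i j = 0 := by
      intro k hk
      have := congrFun (congrFun (hdisj k k₀ hk) i) j
      rw [Matrix.hadamard_apply] at this
      have h0 : A k i j * A k₀ i j = 0 := this
      rcases mul_eq_zero.mp h0 with h | h
      · exact h
      · exact absurd h hk₀
    have hsingle : (∑ k, A k i j) = A k₀ i j :=
      Finset.sum_eq_single k₀ (fun k _ hk => hzero k hk) (fun h => absurd (Finset.mem_univ k₀) h)
    have hAval : A k₀ i j = -1 ∨ A k₀ i j = 1 := by
      rw [hsingle] at hs; exact hs
    have hentry : (∑ k, A k ⊗ₖ B k) (i, r) (j, c) = A k₀ i j * B k₀ r c := by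
      rw [Matrix.sum_apply]
      refine Finset.sum_eq_single k₀ (fun k _ hk => ?_) (fun h => absurd (Finset.mem_univ k₀) h)
      · show A k i j * B k r c = 0
        rw [hzero k hk, zero_mul]
      -- main term
    rw [hentry]
    rcases hAval with h1 | h1 <;> rcases hBentries k₀ r c with h2 | h2 <;>
      rw [h1, h2] <;> norm_num
  · -- orthogonality
    set f : Fin n → Fin n → Matrix (Fin n × Fin b) (Fin n × Fin b) ℝ :=
      fun j k => (A j * (A k)ᵀ) ⊗ₖ (B j * (B k)ᵀ) with hf
    have hmul : (∑ k, A k ⊗ₖ B k) * (∑ k, A k ⊗ₖ B k)ᵀ = ∑ j, ∑ k, f j k := by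
      rw [Matrix.transpose_sum, Finset.sum_mul_sum]
      refine Finset.sum_congr rfl fun j _ => Finset.sum_congr rfl fun k _ => ?_
      rw [hf]
      show (A j ⊗ₖ B j) * (A k ⊗ₖ B k)ᵀ = _
      rw [← Matrix.kroneckerMap_transpose, ← Matrix.mul_kronecker_mul]
    have hanti : ∀ j k, j ≠ k → f j k = - f k j := by
      intro j k hjk
      have hA : A j * (A k)ᵀ = (-(Λ j k)) • (A k * (A j)ᵀ) := by
        have := hAamic j k hjk
        rw [neg_smul]
        linear_combination (norm := module) this
      have hB : B j * (B k)ᵀ = Λ j k • (B k * (B j)ᵀ) := by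
        have := hBamic j k hjk
        linear_combination (norm := module) this
      have hΛsq : Λ j k * Λ j k = 1 := by
        rcases hΛ j k hjk with h | h <;> rw [h] <;> norm_num
      rw [hf]
      show (A j * (A k)ᵀ) ⊗ₖ (B j * (B k)ᵀ) = -((A k * (A j)ᵀ) ⊗ₖ (B k * (B j)ᵀ))
      rw [hA, hB, Matrix.smul_kronecker, Matrix.kronecker_smul, smul_smul, neg_mul, hΛsq,
        neg_smul, one_smul]
    -- split double sum into diagonal and off-diagonal parts
    have hsplit : ∀ j : Fin n, ∑ k, f j k = f j j + ∑ k ∈ Finset.univ.erase j, f j k := by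
      intro j
      exact (Finset.add_sum_erase _ _ (Finset.mem_univ j)).symm
    have hT : ∑ j, ∑ k ∈ Finset.univ.erase j, f j k = 0 := by
      set T := ∑ j, ∑ k ∈ Finset.univ.erase j, f j k with hTdef
      have hswap : T = ∑ j, ∑ k ∈ Finset.univ.erase j, f k j := by
        rw [hTdef]
        rw [Finset.sum_comm' (s := Finset.univ) (t := fun j => Finset.univ.erase j)
          (t' := Finset.univ) (s' := fun k => Finset.univ.erase k)]
        intro j k
        simp [Finset.mem_erase, eq_comm, ne_comm, and_comm]
      have hTneg : T = -T := by
        calc T = ∑ j, ∑ k ∈ Finset.univ.erase j, f j k := hTdef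
        _ = ∑ j, ∑ k ∈ Finset.univ.erase j, (- f k j) := by
            refine Finset.sum_congr rfl fun j _ => Finset.sum_congr rfl fun k hk => ?_
            exact hanti j k (Finset.ne_of_mem_erase hk).symm
        _ = - ∑ j, ∑ k ∈ Finset.univ.erase j, f k j := by simp [Finset.sum_neg_distrib]
        _ = -T := by rw [← hswap]
      have : T + T = 0 := by nth_rewrite 2 [hTneg]; simp
      ext p q
      have h2 := congrFun (congrFun this p) q
      rw [Matrix.add_apply] at h2
      have : T p q + T p q = 0 := h2
      simpa using by linarith
    have hdiag : ∑ j, f j j = ((n * b : ℕ) : ℝ) • 1 := by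
      have : ∀ j : Fin n, f j j = (1 : Matrix (Fin n) (Fin n) ℝ) ⊗ₖ (B j * (B j)ᵀ) := by
        intro j; rw [hf]; show (A j * (A j)ᵀ) ⊗ₖ _ = _; rw [hAorth j]
      rw [Finset.sum_congr rfl fun j _ => this j]
      have hk1 : ∑ j, (1 : Matrix (Fin n) (Fin n) ℝ) ⊗ₖ (B j * (B j)ᵀ)
          = (1 : Matrix (Fin n) (Fin n) ℝ) ⊗ₖ (∑ j, B j * (B j)ᵀ) := by
        ext ⟨i, r⟩ ⟨j, c⟩
        simp [Matrix.sum_apply, Matrix.kroneckerMap_apply, Finset.mul_sum]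
      rw [hk1, hBsum, Matrix.kronecker_smul, Matrix.one_kronecker_one]
    rw [hmul, Finset.sum_congr rfl fun j _ => hsplit j, Finset.sum_add_distrib, hT, add_zero,
      hdiag]
end
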